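/- Let α: ℝⁿ → ℝ be locally Lipschitz and suppose that for every λ and every η ∈ ∂_c α(λ) there is an invariant measure μ_{λ,η} with ρ(μ_{λ,η}) = η. If a₁, a₂ ∈ ℝⁿ satisfy α(a₂) − α(a₁) ≥ 1, then there exists an invariant measure μ with ⟨ρ(μ), a₂ − a₁⟩ ≥ 1. -/

import Mathlib

open MeasureTheory Filter Set Topology RealInnerProductSpace Metric
open scoped NNReal

/-- The Clarke subdifferential of a (locally Lipschitz) function: the convex hull of all
limits of gradients at nearby points of differentiability. -/
def clarkeSubdiff {n : ℕ} (f : EuclideanSpace ℝ (Fin n) → ℝ)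
    (a : EuclideanSpace ℝ (Fin n)) : Set (EuclideanSpace ℝ (Fin n)) :=
  convexHull ℝ {v | ∃ u : ℕ → EuclideanSpace ℝ (Fin n),
    (∀ k, DifferentiableAt ℝ f (u k)) ∧
    Tendsto u atTop (𝓝 a) ∧
    Tendsto (fun k => gradient f (u k)) atTop (𝓝 v)}


theorem my_lipschitzOnWith_of_compact_convex {E : Type*} [NormedAddCommGroup E]
    [NormedSpace ℝ E] {f : E → ℝ} (hf : LocallyLipschitz f) {s : Set E}
    (hs : IsCompact s) (hconv : Convex ℝ s) : ∃ K : ℝ≥0, LipschitzOnWith K f s := by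
  have hloc : ∀ x : E, ∃ K : ℝ≥0, ∃ r : ℝ, 0 < r ∧ LipschitzOnWith K f (ball x r) := by
    intro x
    obtain ⟨K, t, ht, hK⟩ := hf x
    obtain ⟨r, hr, hball⟩ := Metric.mem_nhds_iff.1 ht
    exact ⟨K, r, hr, hK.mono hball⟩
  choose K r hr hK using hloc
  obtain ⟨I, -, hI⟩ := hs.elim_nhds_subcover (fun x => ball x (r x))
    (fun x _ => ball_mem_nhds x (hr x))
  set Km : ℝ≥0 := I.sup K with hKm
  obtain ⟨δ, hδ, hleb⟩ := lebesgue_number_lemma_of_metric hs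
    (c := fun i : I => ball (i : E) (r i)) (fun i => isOpen_ball)
    (by intro x hx; obtain ⟨y, hy, hxy⟩ := mem_iUnion₂.1 (hI hx)
        exact mem_iUnion.2 ⟨⟨y, hy⟩, hxy⟩)
  have hclose : ∀ y ∈ s, ∀ z ∈ s, dist y z < δ → dist (f y) (f z) ≤ Km * dist y z := by
    intro y hy z hz hyz
    obtain ⟨i, hi⟩ := hleb y hy
    have h1 : y ∈ ball (i : E) (r i) := hi (mem_ball_self hδ)
    have h2 : z ∈ ball (i : E) (r i) := hi (by simpa [mem_ball, dist_comm] using hyz)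
    calc dist (f y) (f z) ≤ (K i) * dist y z :=
          (lipschitzOnWith_iff_dist_le_mul.1 (hK i)) _ h1 _ h2
      _ ≤ Km * dist y z := by
          gcongr
          exact_mod_cast NNReal.coe_le_coe.2 (Finset.le_sup i.2)
  refine ⟨Km, lipschitzOnWith_iff_dist_le_mul.2 fun y hy z hz => ?_⟩
  rcases eq_or_ne y z with rfl | hne
  · simp
  have hD : 0 < dist y z := dist_pos.2 hne
  obtain ⟨N, hN⟩ := exists_nat_gt (dist y z / δ)
  have hN0 : 0 < (N : ℝ) := lt_trans (div_pos hD hδ) hN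
  have hstep : dist y z / N < δ := by
    rw [div_lt_iff₀ hN0]
    calc dist y z = (dist y z / δ) * δ := by field_simp
      _ < N * δ := by gcongr
      _ = δ * N := mul_comm _ _
  set p : ℕ → E := fun i => y + ((i : ℝ) / N) • (z - y) with hp
  have hpmem : ∀ i ≤ N, p i ∈ s := by
    intro i hi
    exact hconv.add_smul_sub_mem hy hz
      ⟨div_nonneg (Nat.cast_nonneg i) hN0.le, (div_le_one hN0).2 (by exact_mod_cast hi)⟩
  have hpdist : ∀ i, dist (p i) (p (i + 1)) = dist y z / N := by
    intro i
    have : p (i + 1) - p i = ((1 : ℝ) / N) • (z - y) := by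
      simp only [hp]
      rw [add_sub_add_left_eq_sub, ← sub_smul]
      congr 1
      push_cast
      ring
    rw [dist_eq_norm, ← neg_sub, norm_neg, this, norm_smul, dist_eq_norm, ← neg_sub y z,
      norm_neg]
    simp [abs_of_nonneg (by positivity : (0:ℝ) ≤ 1 / (N:ℝ)), div_eq_mul_inv, mul_comm]
  have hp0 : p 0 = y := by simp [hp]
  have hpN : p N = z := by
    simp only [hp]
    rw [div_self hN0.ne', one_smul]
    abel
  calc dist (f y) (f z) = dist (f (p 0)) (f (p N)) := by rw [hp0, hpN]
    _ ≤ ∑ i ∈ Finset.range N, dist (f (p i)) (f (p (i + 1))) :=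
        dist_le_range_sum_dist (fun i => f (p i)) N
    _ ≤ ∑ i ∈ Finset.range N, Km * (dist y z / N) := by
        refine Finset.sum_le_sum fun i hi => ?_
        have hiN := Finset.mem_range.1 hi
        have := hclose (p i) (hpmem i hiN.le) (p (i + 1)) (hpmem (i + 1) hiN)
          (by rw [hpdist i]; exact hstep)
        rw [hpdist i] at this
        exact this
    _ = Km * dist y z := by
        rw [Finset.sum_const, Finset.card_range, nsmul_eq_mul]
        field_simp


theorem my_key {n : ℕ} (F : EuclideanSpace ℝ (Fin n) → ℝ) {K : ℝ≥0}
    (hF : LipschitzWith K F) (a₁ a₂ : EuclideanSpace ℝ (Fin n))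
    (h : 1 ≤ F a₂ - F a₁) {ε : ℝ} (hε : 0 < ε) (hε1 : ε ≤ 1) :
    ∃ u ∈ thickening 1 (segment ℝ a₁ a₂), DifferentiableAt ℝ F u ∧
      1 - ε ≤ (inner ℝ (gradient F u) (a₂ - a₁) : ℝ) := by
  by_contra hcon
  push_neg at hcon
  set d := a₂ - a₁ with hd
  set U := thickening 1 (segment ℝ a₁ a₂) with hU
  set δ : ℝ := min (ε / (4 * ((K : ℝ) + 1))) (1 / 2) with hδdef
  have hK0 : (0:ℝ) ≤ (K : ℝ) := K.coe_nonneg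
  have hδpos : 0 < δ := lt_min (by positivity) (by norm_num)
  have hδ1 : δ < 1 := lt_of_le_of_lt (min_le_right _ _) (by norm_num)
  have hδK : (K : ℝ) * δ ≤ ε / 4 := by
    have h1 : δ ≤ ε / (4 * ((K : ℝ) + 1)) := min_le_left _ _
    have h2 : (K : ℝ) * δ ≤ (K : ℝ) * (ε / (4 * ((K : ℝ) + 1))) := by gcongr
    refine h2.trans ?_
    rw [mul_div_assoc']
    rw [div_le_div_iff₀ (by positivity) (by norm_num)]
    nlinarith
  set A := ball a₁ δ with hA
  have hAmeas : MeasurableSet A := measurableSet_ball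
  have hAne : volume A ≠ ⊤ := measure_ball_lt_top.ne
  set volA : ℝ := (volume A).toReal with hvolA
  have hvolApos : 0 < volA := by
    rw [hvolA]
    exact ENNReal.toReal_pos (measure_ball_pos volume a₁ hδpos).ne' hAne
  -- tube inclusion
  have htube : ∀ x ∈ A, ∀ t ∈ Icc (0:ℝ) 1, x + t • d ∈ U := by
    intro x hx t ht
    rw [hU, mem_thickening_iff]
    refine ⟨a₁ + t • d, ?_, ?_⟩
    · exact (convex_segment a₁ a₂).add_smul_sub_mem (left_mem_segment ℝ a₁ a₂)
        (right_mem_segment ℝ a₁ a₂) ht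
    · rw [dist_add_right]
      exact lt_trans (mem_ball.1 hx) hδ1
  -- lower bound near a₁
  have hlow : ∀ x ∈ A, 1 - ε / 2 ≤ F (x + d) - F x := by
    intro x hx
    have h1 : dist (F (x + d)) (F a₂) ≤ (K : ℝ) * dist x a₁ := by
      have := hF.dist_le_mul (x + d) a₂
      have he : dist (x + d) a₂ = dist x a₁ := by
        rw [hd, dist_eq_norm, dist_eq_norm]
        congr 1
        abel
      rwa [he] at this
    have h2 : dist (F x) (F a₁) ≤ (K : ℝ) * dist x a₁ := hF.dist_le_mul x a₁
    have hxd : dist x a₁ ≤ δ := (mem_ball.1 hx).le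
    have hKd : (K : ℝ) * dist x a₁ ≤ ε / 4 := by
      refine le_trans ?_ hδK
      gcongr
    rw [Real.dist_eq] at h1 h2
    have b1 := abs_le.1 (h1.trans hKd)
    have b2 := abs_le.1 (h2.trans hKd)
    linarith [b1.1, b1.2, b2.1, b2.2]
  -- translated functions
  have hGt : ∀ t : ℝ, LipschitzWith K (fun x => F (x + t • d)) := by
    intro t
    have h' := hF.comp (LipschitzWith.of_dist_le_mul (K := 1)
      (f := fun x : EuclideanSpace ℝ (Fin n) => x + t • d) (fun x y => by simp))
    rw [mul_one] at h'
    exact h'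
  have hcontt : ∀ t : ℝ, Continuous (fun x : EuclideanSpace ℝ (Fin n) => F (x + t • d)) :=
    fun t => (hGt t).continuous
  have hInt : ∀ t : ℝ, IntegrableOn (fun x => F (x + t • d)) A volume := fun t =>
    ((hcontt t).continuousOn.integrableOn_compact (isCompact_closedBall a₁ δ)).mono_set
      ball_subset_closedBall
  have hlineEq : ∀ (t : ℝ) (x : EuclideanSpace ℝ (Fin n)),
      lineDeriv ℝ (fun y => F (y + t • d)) x d = lineDeriv ℝ F (x + t • d) d := by
    intro t x
    simp only [lineDeriv]
    congr 1
    ext s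
    rw [add_right_comm]
  have hIntL : ∀ t : ℝ, IntegrableOn (fun x => lineDeriv ℝ F (x + t • d) d) A volume := by
    intro t
    have := ((hGt t).locallyIntegrable_lineDeriv (μ := volume) d).integrableOn_isCompact
      (isCompact_closedBall a₁ δ)
    have heq : (fun x => lineDeriv ℝ (fun y => F (y + t • d)) x d)
        = fun x => lineDeriv ℝ F (x + t • d) d := funext fun x => hlineEq t x
    rw [heq] at this
    exact this.mono_set ball_subset_closedBall
  -- setup ψ and c
  set ψ : ℝ → ℝ := fun t => ∫ x in A, F (x + t • d) with hψdef
  set c : ℝ → ℝ := fun t => ∫ x in A, lineDeriv ℝ F (x + t • d) d with hcdef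
  have hindmul : ∀ q : EuclideanSpace ℝ (Fin n) → ℝ,
      (fun x => q x * A.indicator (fun _ => (1:ℝ)) x) = A.indicator q := by
    intro q
    funext x
    by_cases hx : x ∈ A <;> simp [indicator_of_mem, indicator_of_notMem, hx]
  have hgint : Integrable (A.indicator fun _ => (1:ℝ)) := by
    rw [integrable_indicator_iff hAmeas]
    exact integrableOn_const measure_ball_lt_top.ne
  have hψd : ∀ t : ℝ, HasDerivWithinAt ψ (c t) (Ici t) t := by
    intro t
    have T := (hGt t).integral_inv_smul_sub_mul_tendsto_integral_lineDeriv_mul hgint d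
    have hlim : (∫ x, lineDeriv ℝ (fun y => F (y + t • d)) x d
        * A.indicator (fun _ => (1:ℝ)) x) = c t := by
      rw [hindmul, integral_indicator hAmeas, hcdef]
      exact setIntegral_congr_fun hAmeas (fun x _ => hlineEq t x)
    rw [hlim] at T
    rw [hasDerivWithinAt_iff_tendsto_slope, Ici_sdiff_left]
    have hmap : 𝓝[Ioi t] t = Filter.map (fun h => t + h) (𝓝[>] (0:ℝ)) := by
      have := (Homeomorph.addLeft t).isEmbedding.map_nhdsWithin_eq (Ioi 0) 0
      simp only [Homeomorph.coe_addLeft, image_const_add_Ioi, add_zero] at this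
      exact this.symm
    rw [hmap, tendsto_map'_iff]
    apply T.congr'
    filter_upwards [self_mem_nhdsWithin] with h (hh : 0 < h)
    have hGeq : ∀ x : EuclideanSpace ℝ (Fin n), F (x + h • d + t • d) = F (x + (t + h) • d) := by
      intro x
      congr 1
      rw [add_smul]
      abel
    calc (∫ x, (h⁻¹ • (F (x + h • d + t • d) - F (x + t • d)))
          * A.indicator (fun _ => (1:ℝ)) x)
        = ∫ x in A, h⁻¹ • (F (x + (t + h) • d) - F (x + t • d)) := by
          rw [hindmul, integral_indicator hAmeas]
          exact setIntegral_congr_fun hAmeas (fun x _ => by rw [hGeq x])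
      _ = h⁻¹ • ∫ x in A, (F (x + (t + h) • d) - F (x + t • d)) := by
          rw [integral_smul]
      _ = h⁻¹ * (ψ (t + h) - ψ t) := by
          rw [integral_sub (hInt (t + h)) (hInt t), hψdef, smul_eq_mul]
      _ = Function.comp (slope ψ t) (fun h => t + h) h := by
          simp only [Function.comp_apply, slope_def_field]
          rw [add_sub_cancel_left]
          ring
  -- a.e. differentiability of translates
  have hae : ∀ t : ℝ, ∀ᵐ x : EuclideanSpace ℝ (Fin n), DifferentiableAt ℝ F (x + t • d) :=
    fun t => (measurePreserving_add_right volume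
      (t • d)).quasiMeasurePreserving.tendsto_ae.eventually hF.ae_differentiableAt
  -- derivative bound
  have hbound : ∀ t ∈ Ico (0:ℝ) 1, c t ≤ (1 - ε) * volA := by
    intro t ht
    have hb : ∀ᵐ x ∂(volume.restrict A), lineDeriv ℝ F (x + t • d) d ≤ 1 - ε := by
      filter_upwards [ae_restrict_of_ae (hae t), ae_restrict_mem hAmeas] with x hx hxA
      have hmem : x + t • d ∈ U := htube x hxA t ⟨ht.1, ht.2.le⟩
      have hlt := hcon (x + t • d) hmem hx
      have : lineDeriv ℝ F (x + t • d) d = (inner ℝ (gradient F (x + t • d)) d : ℝ) := by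
        rw [hx.lineDeriv_eq_fderiv]
        exact (InnerProductSpace.toDual_symm_apply).symm
      rw [this]
      exact hlt.le
    calc c t ≤ ∫ _ in A, (1 - ε) := by
          refine setIntegral_mono_ae_restrict (hIntL t) ?_ hb
          exact integrableOn_const measure_ball_lt_top.ne
      _ = (1 - ε) * volA := by
          rw [setIntegral_const, smul_eq_mul, mul_comm]; rfl
  -- continuity of ψ
  have hψlip : ∀ s t : ℝ, |ψ t - ψ s| ≤ (K : ℝ) * ‖d‖ * |t - s| * volA := by
    intro s t
    have hsub : ψ t - ψ s = ∫ x in A, (F (x + t • d) - F (x + s • d)) :=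
      (integral_sub (hInt t) (hInt s)).symm
    rw [hsub]
    have hptw : ∀ x ∈ A, |F (x + t • d) - F (x + s • d)| ≤ (K : ℝ) * ‖d‖ * |t - s| := by
      intro x _
      have := hF.dist_le_mul (x + t • d) (x + s • d)
      rw [Real.dist_eq, dist_eq_norm] at this
      refine this.trans ?_
      have : x + t • d - (x + s • d) = (t - s) • d := by
        rw [sub_smul]; abel
      rw [this, norm_smul, Real.norm_eq_abs]
      ring_nf
      try exact le_rfl
    calc |∫ x in A, (F (x + t • d) - F (x + s • d))|
        ≤ ∫ x in A, |F (x + t • d) - F (x + s • d)| := by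
          simpa [Real.norm_eq_abs] using norm_integral_le_integral_norm
            (μ := volume.restrict A) (fun x => F (x + t • d) - F (x + s • d))
      _ ≤ ∫ _ in A, (K : ℝ) * ‖d‖ * |t - s| := by
          refine setIntegral_mono_on ((hInt t).sub (hInt s)).abs ?_ hAmeas hptw
          exact integrableOn_const measure_ball_lt_top.ne
      _ = (K : ℝ) * ‖d‖ * |t - s| * volA := by
          rw [setIntegral_const, smul_eq_mul, mul_comm]; rfl
  have hψcont : ContinuousOn ψ (Icc 0 1) := by
    have : LipschitzWith ((K * ‖d‖₊) * (volume A).toNNReal) ψ := by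
      apply LipschitzWith.of_dist_le_mul
      intro t s
      rw [Real.dist_eq, Real.dist_eq]
      have := hψlip s t
      refine this.trans (le_of_eq ?_)
      push_cast
      rw [hvolA]
      ring
    exact this.continuous.continuousOn
  -- Gronwall-type comparison
  have hgron : ψ 1 ≤ ψ 0 + (1 - ε) * volA * 1 := by
    have := image_le_of_deriv_right_le_deriv_boundary (f := ψ) (f' := c) (a := 0) (b := 1)
      hψcont (fun x _ => hψd x) (B := fun t => ψ 0 + ((1 - ε) * volA) * t)
      (B' := fun _ => (1 - ε) * volA) (by simp)
      ((continuous_const.add (continuous_const.mul continuous_id)).continuousOn)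
      (fun x _ => by
        simpa using (((hasDerivAt_id x).const_mul ((1 - ε) * volA)).const_add (ψ 0)).hasDerivWithinAt)
      hbound
    simpa using this (right_mem_Icc.2 zero_le_one)
  have hψ1 : ψ 1 = ∫ x in A, F (x + d) := by rw [hψdef]; simp
  have hψ0 : ψ 0 = ∫ x in A, F x := by rw [hψdef]; simp
  have hi1 : IntegrableOn (fun x => F (x + d)) A volume := by simpa using hInt 1
  have hi0 : IntegrableOn F A volume := by simpa using hInt 0
  have hlower : (1 - ε / 2) * volA ≤ ψ 1 - ψ 0 := by
    rw [hψ1, hψ0, ← integral_sub hi1 hi0]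
    calc (1 - ε / 2) * volA = ∫ _ in A, (1 - ε / 2) := by
          rw [setIntegral_const, smul_eq_mul, mul_comm]; rfl
      _ ≤ ∫ x in A, (F (x + d) - F x) :=
          setIntegral_mono_on (integrableOn_const measure_ball_lt_top.ne)
            (hi1.sub hi0) hAmeas hlow
  nlinarith [hvolApos, hε, hgron, hlower]

open Metric in
open scoped NNReal in
/-- If every element of every Clarke subdifferential of `α` is the rotation vector of some
invariant measure, and `α(a₂) − α(a₁) ≥ 1`, then there exists an invariant measure `μ` with
`⟨ρ(μ), a₂ − a₁⟩ ≥ 1`. -/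
theorem stmt19 {n : ℕ} {P : Type*} [MeasurableSpace P]
    (α : EuclideanSpace ℝ (Fin n) → ℝ) (hα : LocallyLipschitz α)
    (Inv : Set (Measure P)) (ρ : Measure P → EuclideanSpace ℝ (Fin n))
    (hyp : ∀ l : EuclideanSpace ℝ (Fin n), ∀ η ∈ clarkeSubdiff α l,
      ∃ μ ∈ Inv, ρ μ = η)
    (a₁ a₂ : EuclideanSpace ℝ (Fin n))
    (h : α a₂ - α a₁ ≥ 1) :
    ∃ μ ∈ Inv, ⟪ρ μ, a₂ - a₁⟫ ≥ 1 := by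
  set d := a₂ - a₁ with hd
  set seg := segment ℝ a₁ a₂ with hseg
  have hsegc : IsCompact seg := by
    rw [hseg, segment_eq_image]
    exact isCompact_Icc.image (by fun_prop)
  obtain ⟨K₀, hK₀⟩ := my_lipschitzOnWith_of_compact_convex hα (hsegc.cthickening (r := 1))
    ((convex_segment a₁ a₂).cthickening 1)
  obtain ⟨F, hFlip, hEq⟩ := hK₀.extend_real
  have ha₁C : a₁ ∈ cthickening 1 seg := self_subset_cthickening _ (left_mem_segment ℝ a₁ a₂)
  have ha₂C : a₂ ∈ cthickening 1 seg := self_subset_cthickening _ (right_mem_segment ℝ a₁ a₂)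
  have h1 : 1 ≤ F a₂ - F a₁ := by rw [← hEq ha₂C, ← hEq ha₁C]; exact h
  have hseq : ∀ k : ℕ, ∃ u, u ∈ thickening 1 seg ∧ DifferentiableAt ℝ α u ∧
      gradient α u = gradient F u ∧ 1 - 1 / ((k : ℝ) + 1) ≤ (inner ℝ (gradient F u) d : ℝ) := by
    intro k
    obtain ⟨u, hu, hdF, hinn⟩ := my_key F hFlip a₁ a₂ h1 (ε := 1 / ((k : ℝ) + 1))
      (by positivity) (by rw [div_le_one (by positivity)]; linarith [Nat.cast_nonneg (α := ℝ) k])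
    have hEq' : α =ᶠ[𝓝 u] F := by
      filter_upwards [isOpen_thickening.mem_nhds hu] with y hy
        using hEq (thickening_subset_cthickening 1 seg hy)
    exact ⟨u, hu, hEq'.differentiableAt_iff.2 hdF, hEq'.gradient_eq, hinn⟩
  choose u hu hdiff hgradeq hinner using hseq
  have hub : ∀ k, u k ∈ cthickening 1 seg := fun k => thickening_subset_cthickening _ _ (hu k)
  obtain ⟨a, -, φ, hφ, hua⟩ := (hsegc.cthickening (r := 1)).tendsto_subseq hub
  have hgb : ∀ k, gradient α (u (φ k)) ∈ closedBall (0 : EuclideanSpace ℝ (Fin n)) K₀ := by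
    intro k
    rw [mem_closedBall, dist_zero_right, hgradeq]
    have : gradient F (u (φ k))
        = (InnerProductSpace.toDual ℝ _).symm (fderiv ℝ F (u (φ k))) := rfl
    rw [this, LinearIsometryEquiv.norm_map]
    exact norm_fderiv_le_of_lipschitz ℝ hFlip
  obtain ⟨v, -, φ₂, hφ₂, hgv⟩ :=
    (isCompact_closedBall (0 : EuclideanSpace ℝ (Fin n)) K₀).tendsto_subseq hgb
  set w : ℕ → EuclideanSpace ℝ (Fin n) := fun k => u (φ (φ₂ k)) with hw
  have hvmem : v ∈ clarkeSubdiff α a := by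
    apply subset_convexHull ℝ _
    refine ⟨w, fun k => hdiff _, hua.comp hφ₂.tendsto_atTop, ?_⟩
    exact hgv
  obtain ⟨μ, hμ, hρ⟩ := hyp a v hvmem
  refine ⟨μ, hμ, ?_⟩
  rw [hρ]
  have hlim1 : Filter.Tendsto (fun k : ℕ => (inner ℝ (gradient α (w k)) d : ℝ)) atTop
      (𝓝 (inner ℝ v d)) := hgv.inner tendsto_const_nhds
  have hlim2 : Filter.Tendsto (fun k : ℕ => 1 - 1 / ((k : ℝ) + 1)) atTop (𝓝 1) := by
    have h0 : Filter.Tendsto (fun k : ℕ => (1 : ℝ)) atTop (𝓝 1) := tendsto_const_nhds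
    simpa using h0.sub tendsto_one_div_add_atTop_nhds_zero_nat
  have hle : ∀ k : ℕ, 1 - 1 / ((k : ℝ) + 1) ≤ (inner ℝ (gradient α (w k)) d : ℝ) := by
    intro k
    have hWg : (inner ℝ (gradient α (w k)) d : ℝ) = inner ℝ (gradient F (u (φ (φ₂ k)))) d := by
      rw [hw]; rw [hgradeq]
    rw [hWg]
    refine le_trans ?_ (hinner (φ (φ₂ k)))
    have hmono : k ≤ φ (φ₂ k) := (hφ.comp hφ₂).le_apply
    have hk : (k : ℝ) + 1 ≤ (φ (φ₂ k) : ℝ) + 1 := by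
      have : (k : ℝ) ≤ (φ (φ₂ k) : ℝ) := Nat.cast_le.2 hmono
      linarith
    have hkpos : (0 : ℝ) < (k : ℝ) + 1 := by positivity
    have := one_div_le_one_div_of_le hkpos hk
    linarith
  exact le_of_tendsto_of_tendsto' hlim2 hlim1 hle
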